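/- Let X ~ X(n, 𝐩) be a multi-parameter random complex and 0 ≤ k ≤ n−2. For τ ⊆ V with #τ = k and P(τ ∈ X) > 0, conditionally on the event {τ ∈ X}, the 1-skeleton of the link lk_X(τ) is distributed as follows: each vertex v ∈ V∖τ belongs to the link independently with probability r_{k−1} = Π_{i=0}^{k} p_i^{C(k,i)}, and given the vertex set, each edge between link vertices is present independently with probability r_k / r_{k−1} = Π_{i=1}^{k+1} p_i^{C(k,i−1)}. In particular the number of vertices of lk_X(τ) is Bin(n−k, r_{k−1})-distributed. -/

import Mathlib

open MeasureTheory
open scoped BigOperators ENNReal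

/-- The probability space for the multi-parameter random complex on `n` vertices: an independent
uniform-`[0,1]` random label for each potential simplex. -/
noncomputable def coinSpace (n : ℕ) : Measure (Finset (Fin n) → ℝ) :=
  Measure.pi fun _ => volume.restrict (Set.Icc (0 : ℝ) 1)

open Classical in
/-- The multi-parameter random complex `X(n, 𝐩)`: a simplex `σ` (of dimension `σ.card − 1`) is
present iff for every nonempty face `τ ⊆ σ` the coin of `τ` succeeds, i.e.
`ω τ ≤ p (dim τ)`.  This realizes the iterative construction in which each `i`-simplex whose
boundary is present is retained with independent probability `p i`. -/
noncomputable def Xof {n : ℕ} (p : ℕ → ℝ) (ω : Finset (Fin n) → ℝ) :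
    Finset (Finset (Fin n)) :=
  Finset.univ.filter fun σ =>
    σ ≠ ∅ ∧ ∀ τ ∈ σ.powerset, τ ≠ ∅ → ω τ ≤ p (τ.card - 1)

/-- The link `lk_X(τ) = {σ ∈ X : σ ∩ τ = ∅ and σ ∪ τ ∈ X}`. -/
def link {n : ℕ} (X : Finset (Finset (Fin n))) (τ : Finset (Fin n)) :
    Finset (Finset (Fin n)) :=
  X.filter (fun σ => σ ∩ τ = ∅ ∧ σ ∪ τ ∈ X)

/-- The vertex set of the link `lk_X(τ)`. -/
def linkVerts {n : ℕ} (X : Finset (Finset (Fin n))) (τ : Finset (Fin n)) : Finset (Fin n) :=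
  Finset.univ.filter (fun v => {v} ∈ link X τ)

/-- The degree of `v` in the `1`-skeleton of the link `lk_X(τ)`. -/
def linkDeg {n : ℕ} (X : Finset (Finset (Fin n))) (τ : Finset (Fin n)) (v : Fin n) : ℕ :=
  (Finset.univ.filter (fun w => w ≠ v ∧ ({v, w} : Finset (Fin n)) ∈ link X τ)).card

/-- The averaging matrix of the `1`-skeleton of the link `lk_X(τ)`, indexed by the vertices of
the link: entries `1/deg v` for neighbors, `1` on the diagonal at isolated vertices, `0`
otherwise. -/
noncomputable def linkAvg {n : ℕ} (X : Finset (Finset (Fin n))) (τ : Finset (Fin n)) :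
    Matrix ↥(linkVerts X τ) ↥(linkVerts X τ) ℝ := fun v w =>
  if v.1 ≠ w.1 ∧ ({v.1, w.1} : Finset (Fin n)) ∈ link X τ then 1 / (linkDeg X τ v.1 : ℝ)
  else if v = w ∧ linkDeg X τ v.1 = 0 then 1 else 0

/-- The random-walk Laplacian `𝓛 = I − A` of the `1`-skeleton of the link `lk_X(τ)`. -/
noncomputable def linkLap {n : ℕ} (X : Finset (Finset (Fin n))) (τ : Finset (Fin n)) :
    Matrix ↥(linkVerts X τ) ↥(linkVerts X τ) ℝ :=
  1 - linkAvg X τ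

/-- `r_{k−1} = Π_{i=0}^{k} p_i^{C(k,i)}`. -/
noncomputable def rPrev (p : ℕ → ℝ) (k : ℕ) : ℝ :=
  ∏ i ∈ Finset.range (k + 1), p i ^ (k.choose i)

/-- `r_k = Π_{i=0}^{k+1} p_i^{C(k+1,i)}`. -/
noncomputable def rCur (p : ℕ → ℝ) (k : ℕ) : ℝ :=
  ∏ i ∈ Finset.range (k + 2), p i ^ ((k + 1).choose i)

lemma pi_inter_split {ι : Type*} [Fintype ι] (μ : ι → Measure ℝ)
    [∀ i, IsProbabilityMeasure (μ i)]
    (P : ι → Prop) [DecidablePred P] (A B : Set (ι → ℝ))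
    (hA : MeasurableSet A) (hB : MeasurableSet B)
    (hAdep : ∀ ω ω' : ι → ℝ, (∀ i, P i → ω i = ω' i) → ω ∈ A → ω' ∈ A)
    (hBdep : ∀ ω ω' : ι → ℝ, (∀ i, ¬ P i → ω i = ω' i) → ω ∈ B → ω' ∈ B) :
    Measure.pi μ (A ∩ B) = Measure.pi μ A * Measure.pi μ B := by
  classical
  set e := MeasurableEquiv.piEquivPiSubtypeProd (fun _ : ι => ℝ) P with he
  have hmp := MeasureTheory.measurePreserving_piEquivPiSubtypeProd μ P
  set A' : Set ((i : {i // P i}) → ℝ) := (fun x => e.symm (x, fun _ => 0)) ⁻¹' A with hA'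
  set B' : Set ((i : {i // ¬ P i}) → ℝ) := (fun y => e.symm (fun _ => 0, y)) ⁻¹' B with hB'
  have hsymm : ∀ (x : (i : {i // P i}) → ℝ) (y : (i : {i // ¬ P i}) → ℝ) (i : ι),
      e.symm (x, y) i = if h : P i then x ⟨i, h⟩ else y ⟨i, h⟩ := by
    intro x y i
    rfl
  have hmA' : MeasurableSet A' :=
    hA.preimage (e.symm.measurable.comp (measurable_id.prodMk measurable_const))
  have hmB' : MeasurableSet B' :=
    hB.preimage (e.symm.measurable.comp (measurable_const.prodMk measurable_id))
  have keyA : ∀ C : Set ((i : {i // ¬ P i}) → ℝ), A ∩ (fun ω => e ω) ⁻¹' (Set.univ ×ˢ C)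
      = (fun ω => e ω) ⁻¹' (A' ×ˢ C) := by
    intro C
    ext ω
    simp only [Set.mem_inter_iff, Set.mem_preimage, Set.mem_prod, Set.mem_univ, true_and, hA',
      Set.mem_preimage]
    constructor
    · rintro ⟨h1, h2⟩
      refine ⟨hAdep ω _ (fun i hi => ?_) h1, h2⟩
      rw [hsymm]
      simp only [hi, dif_pos]
      rfl
    · rintro ⟨h1, h2⟩
      refine ⟨hAdep _ ω (fun i hi => ?_) h1, h2⟩
      rw [hsymm]
      simp only [hi, dif_pos]
      rfl
  have keyB : B = (fun ω => e ω) ⁻¹' (Set.univ ×ˢ B') := by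
    ext ω
    simp only [Set.mem_preimage, Set.mem_prod, Set.mem_univ, true_and, hB', Set.mem_preimage]
    constructor
    · intro h1
      refine hBdep ω _ (fun i hi => ?_) h1
      rw [hsymm]
      simp only [hi, dif_neg]
      rfl
    · intro h1
      refine hBdep _ ω (fun i hi => ?_) h1
      rw [hsymm]
      simp only [hi, dif_neg]
      rfl
  have hAeq : A = (fun ω => e ω) ⁻¹' (A' ×ˢ Set.univ) := by
    have := keyA Set.univ
    simpa using this
  have hprod : ∀ (S : Set ((i : {i // P i}) → ℝ)) (T : Set ((i : {i // ¬ P i}) → ℝ)),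
      MeasurableSet S → MeasurableSet T →
      Measure.pi μ ((fun ω => e ω) ⁻¹' (S ×ˢ T))
        = Measure.pi (fun i : {i // P i} => μ i) S * Measure.pi (fun i : {i // ¬ P i} => μ i) T := by
    intro S T hS hT
    rw [hmp.measure_preimage (hS.prod hT).nullMeasurableSet, Measure.prod_prod]
  have h1 : Measure.pi μ (A ∩ B) = Measure.pi (fun i : {i // P i} => μ i) A'
      * Measure.pi (fun i : {i // ¬ P i} => μ i) B' := by
    rw [keyB, keyA B', hprod _ _ hmA' hmB']
  have h2 : Measure.pi μ A = Measure.pi (fun i : {i // P i} => μ i) A' := by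
    rw [hAeq, hprod _ _ hmA' MeasurableSet.univ, measure_univ, mul_one]
  have h3 : Measure.pi μ B = Measure.pi (fun i : {i // ¬ P i} => μ i) B' := by
    rw [keyB, hprod _ _ MeasurableSet.univ hmB', measure_univ, one_mul]
  rw [h1, h2, h3]
lemma pi_inter_blocks {ι κ : Type*} [Fintype ι] [DecidableEq κ] (μ : ι → Measure ℝ)
    [∀ i, IsProbabilityMeasure (μ i)]
    (J : Finset κ) (t : κ → Set ι) (E : κ → Set (ι → ℝ))
    (hdisj : ∀ j ∈ J, ∀ j' ∈ J, j ≠ j' → ∀ i, i ∈ t j → i ∉ t j')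
    (hE : ∀ j ∈ J, MeasurableSet (E j))
    (hdep : ∀ j ∈ J, ∀ ω ω' : ι → ℝ, (∀ i ∈ t j, ω i = ω' i) → ω ∈ E j → ω' ∈ E j) :
    Measure.pi μ (⋂ j ∈ J, E j) = ∏ j ∈ J, Measure.pi μ (E j) := by
  classical
  induction J using Finset.induction_on with
  | empty => simp
  | @insert a J ha ih =>
    rw [Finset.prod_insert ha, ← ih (fun j hj j' hj' h => hdisj j (Finset.mem_insert_of_mem hj)
        j' (Finset.mem_insert_of_mem hj') h)
      (fun j hj => hE j (Finset.mem_insert_of_mem hj))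
      (fun j hj => hdep j (Finset.mem_insert_of_mem hj))]
    rw [Finset.set_biInter_insert]
    refine pi_inter_split μ (fun i => i ∈ t a) (E a) (⋂ j ∈ J, E j)
      (hE a (Finset.mem_insert_self a J))
      (MeasurableSet.biInter J.countable_toSet (fun j hj => hE j (Finset.mem_insert_of_mem hj)))
      (fun ω ω' h => hdep a (Finset.mem_insert_self a J) ω ω' h) ?_
    intro ω ω' h hω
    simp only [Set.mem_iInter] at hω ⊢
    intro j hj
    refine hdep j (Finset.mem_insert_of_mem hj) ω ω' (fun i hi => h i ?_) (hω j hj)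
    intro hia
    exact hdisj a (Finset.mem_insert_self a J) j (Finset.mem_insert_of_mem hj)
      (fun haj => ha (haj ▸ hj)) i hia hi


instance coin_prob : IsProbabilityMeasure (volume.restrict (Set.Icc (0 : ℝ) 1)) :=
  ⟨by simp [Real.volume_Icc]⟩

instance coinSpace_prob (n : ℕ) : IsProbabilityMeasure (coinSpace n) := by
  unfold coinSpace; infer_instance

/-- The block success event. -/
def Succ {n : ℕ} (p : ℕ → ℝ) (τ c : Finset (Fin n)) : Set (Finset (Fin n) → ℝ) :=
  {ω | ∀ ρ : Finset (Fin n), ρ.Nonempty → ρ \ τ = c → ρ ⊆ τ ∪ c → ω ρ ≤ p (ρ.card - 1)}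

open Classical in
lemma Succ_eq_pi {n : ℕ} (p : ℕ → ℝ) (τ c : Finset (Fin n)) :
    Succ p τ c = Set.pi Set.univ (fun ρ : Finset (Fin n) =>
      if ρ.Nonempty ∧ ρ \ τ = c ∧ ρ ⊆ τ ∪ c then Set.Iic (p (ρ.card - 1)) else Set.univ) := by
  ext ω
  simp only [Succ, Set.mem_setOf_eq, Set.mem_pi, Set.mem_univ, forall_const]
  constructor
  · intro h ρ
    split_ifs with hc
    · exact h ρ hc.1 hc.2.1 hc.2.2
    · trivial
  · intro h ρ h1 h2 h3
    have := h ρ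
    rw [if_pos ⟨h1, h2, h3⟩] at this
    exact this

lemma measurableSet_Succ {n : ℕ} (p : ℕ → ℝ) (τ c : Finset (Fin n)) :
    MeasurableSet (Succ p τ c) := by
  classical
  rw [Succ_eq_pi]
  refine MeasurableSet.univ_pi (fun ρ => ?_)
  split_ifs
  · exact measurableSet_Iic
  · exact MeasurableSet.univ

lemma Succ_dep {n : ℕ} (p : ℕ → ℝ) (τ c : Finset (Fin n)) (ω ω' : Finset (Fin n) → ℝ)
    (h : ∀ ρ : Finset (Fin n), (ρ.Nonempty ∧ ρ \ τ = c ∧ ρ ⊆ τ ∪ c) → ω ρ = ω' ρ) :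
    ω ∈ Succ p τ c → ω' ∈ Succ p τ c := by
  intro hs ρ h1 h2 h3
  rw [← h ρ ⟨h1, h2, h3⟩]
  exact hs ρ h1 h2 h3

lemma coord_Iic (c : ℝ) (h0 : 0 ≤ c) (h1 : c ≤ 1) :
    volume.restrict (Set.Icc (0 : ℝ) 1) (Set.Iic c) = ENNReal.ofReal c := by
  rw [Measure.restrict_apply measurableSet_Iic]
  have : Set.Iic c ∩ Set.Icc 0 1 = Set.Icc 0 c := by
    ext x
    simp only [Set.mem_inter_iff, Set.mem_Iic, Set.mem_Icc]
    constructor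
    · rintro ⟨hx, hx0, _⟩; exact ⟨hx0, hx⟩
    · rintro ⟨hx0, hx⟩; exact ⟨hx, hx0, hx.trans h1⟩
  rw [this, Real.volume_Icc]
  simp

/-- measure of a success block for nonempty `c` disjoint from `τ`. -/
lemma measure_Succ {n : ℕ} (p : ℕ → ℝ) (hp : ∀ i, p i ∈ Set.Icc (0 : ℝ) 1)
    (τ c : Finset (Fin n)) (hd : c ∩ τ = ∅) (hc : c.Nonempty) :
    coinSpace n (Succ p τ c)
      = ENNReal.ofReal (∏ s ∈ τ.powerset, p (s.card + c.card - 1)) := by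
  classical
  rw [Succ_eq_pi, coinSpace, Measure.pi_pi]
  have hdisj : Disjoint c τ := Finset.disjoint_iff_inter_eq_empty.2 hd
  have step : ∀ ρ : Finset (Fin n),
      volume.restrict (Set.Icc (0 : ℝ) 1)
        (if ρ.Nonempty ∧ ρ \ τ = c ∧ ρ ⊆ τ ∪ c then Set.Iic (p (ρ.card - 1)) else Set.univ)
      = if ρ.Nonempty ∧ ρ \ τ = c ∧ ρ ⊆ τ ∪ c then ENNReal.ofReal (p (ρ.card - 1)) else 1 := by
    intro ρ
    split_ifs with hcond
    · exact coord_Iic _ (hp _).1 (hp _).2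
    · simp
  rw [Finset.prod_congr rfl (fun ρ _ => step ρ)]
  rw [← Finset.prod_filter]
  rw [ENNReal.ofReal_prod_of_nonneg (fun s _ => (hp _).1)]
  refine Finset.prod_nbij' (fun ρ => ρ ∩ τ) (fun s => s ∪ c) ?_ ?_ ?_ ?_ ?_
  · intro ρ hρ
    simp only [Finset.mem_filter, Finset.mem_univ, true_and] at hρ
    simp [Finset.mem_powerset, Finset.inter_subset_right]
  · intro s hs
    simp only [Finset.mem_powerset] at hs
    simp only [Finset.mem_filter, Finset.mem_univ, true_and]
    refine ⟨Finset.Nonempty.mono Finset.subset_union_right hc, ?_, ?_⟩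
    · rw [Finset.union_sdiff_distrib, Finset.sdiff_eq_empty_iff_subset.2 hs,
        Finset.sdiff_eq_self_of_disjoint hdisj, Finset.empty_union]
    · exact Finset.union_subset (hs.trans Finset.subset_union_left) Finset.subset_union_right
  · intro ρ hρ
    simp only [Finset.mem_filter, Finset.mem_univ, true_and] at hρ
    obtain ⟨h1, h2, h3⟩ := hρ
    show ρ ∩ τ ∪ c = ρ
    rw [← h2]
    ext x
    simp only [Finset.mem_union, Finset.mem_inter, Finset.mem_sdiff]
    tauto
  · intro s hs
    simp only [Finset.mem_powerset] at hs
    show (s ∪ c) ∩ τ = s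
    rw [Finset.union_inter_distrib_right, Finset.inter_eq_left.2 hs, hd, Finset.union_empty]
  · intro ρ hρ
    simp only [Finset.mem_filter, Finset.mem_univ, true_and] at hρ
    obtain ⟨h1, h2, h3⟩ := hρ
    have h4 : (ρ ∩ τ).card + c.card = ρ.card := by
      rw [← h2, Finset.card_inter_add_card_sdiff]
    show ENNReal.ofReal (p (ρ.card - 1)) = ENNReal.ofReal (p ((ρ ∩ τ).card + c.card - 1))
    rw [h4]

lemma mem_Xof_iff {n : ℕ} (p : ℕ → ℝ) (ω : Finset (Fin n) → ℝ) (σ : Finset (Fin n)) :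
    σ ∈ Xof p ω ↔ σ ≠ ∅ ∧ ∀ ρ ⊆ σ, ρ ≠ ∅ → ω ρ ≤ p (ρ.card - 1) := by
  simp [Xof, Finset.mem_filter, Finset.mem_powerset]

lemma Xof_mono {n : ℕ} {p : ℕ → ℝ} {ω : Finset (Fin n) → ℝ} {σ σ' : Finset (Fin n)}
    (h : σ ⊆ σ') (hne : σ ≠ ∅) (hσ' : σ' ∈ Xof p ω) : σ ∈ Xof p ω := by
  rw [mem_Xof_iff] at hσ' ⊢
  exact ⟨hne, fun ρ hρ => hσ'.2 ρ (hρ.trans h)⟩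

lemma union_mem_Xof {n : ℕ} (p : ℕ → ℝ) (τ σ₀ : Finset (Fin n)) (hd : σ₀ ∩ τ = ∅)
    (hne : (σ₀ ∪ τ).Nonempty) (ω : Finset (Fin n) → ℝ) :
    σ₀ ∪ τ ∈ Xof p ω ↔ ∀ c ∈ σ₀.powerset, ω ∈ Succ p τ c := by
  rw [mem_Xof_iff]
  constructor
  · rintro ⟨-, h⟩ c hc ρ h1 h2 h3
    simp only [Finset.mem_powerset] at hc
    refine h ρ ?_ (Finset.nonempty_iff_ne_empty.1 h1)
    intro x hx
    rcases Finset.mem_union.1 (h3 hx) with hx' | hx'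
    · exact Finset.mem_union.2 (Or.inr hx')
    · exact Finset.mem_union.2 (Or.inl (hc hx'))
  · intro h
    refine ⟨Finset.nonempty_iff_ne_empty.1 hne, fun ρ hρ hρne => ?_⟩
    have hsub : ρ \ τ ⊆ σ₀ := by
      intro x hx
      rcases Finset.mem_sdiff.1 hx with ⟨hx1, hx2⟩
      rcases Finset.mem_union.1 (hρ hx1) with h' | h'
      · exact h'
      · exact absurd h' hx2
    refine h (ρ \ τ) (Finset.mem_powerset.2 hsub) ρ
      (Finset.nonempty_iff_ne_empty.2 hρne) rfl ?_
    intro x hx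
    by_cases hxτ : x ∈ τ
    · exact Finset.mem_union.2 (Or.inl hxτ)
    · exact Finset.mem_union.2 (Or.inr (Finset.mem_sdiff.2 ⟨hx, hxτ⟩))

lemma A_eq_Succ {n : ℕ} (p : ℕ → ℝ) (τ : Finset (Fin n)) :
    {ω : Finset (Fin n) → ℝ | τ.Nonempty → τ ∈ Xof p ω} = Succ p τ ∅ := by
  ext ω
  simp only [Set.mem_setOf_eq]
  constructor
  · intro h ρ h1 h2 h3
    rw [Finset.union_empty] at h3
    have hτne : τ.Nonempty := h1.mono h3
    have := (union_mem_Xof p τ ∅ (by simp) (by simpa) ω).1 (by simpa using h hτne)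
    exact this ∅ (by simp) ρ h1 h2 (by simpa)
  · intro h hτne
    have : ∀ c ∈ (∅ : Finset (Fin n)).powerset, ω ∈ Succ p τ c := by
      intro c hc
      simp only [Finset.powerset_empty, Finset.mem_singleton] at hc
      subst hc; exact h
    simpa using (union_mem_Xof p τ ∅ (by simp) (by simpa) ω).2 this

lemma mem_link_iff {n : ℕ} (p : ℕ → ℝ) (τ : Finset (Fin n)) (ω : Finset (Fin n) → ℝ)
    (σ₀ : Finset (Fin n)) (hne : σ₀.Nonempty) (hd : σ₀ ∩ τ = ∅) :
    σ₀ ∈ link (Xof p ω) τ ↔ ∀ c ∈ σ₀.powerset, ω ∈ Succ p τ c := by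
  rw [← union_mem_Xof p τ σ₀ hd (Finset.Nonempty.mono Finset.subset_union_left hne) ω]
  simp only [link, Finset.mem_filter]
  constructor
  · rintro ⟨-, -, h⟩; exact h
  · intro h
    exact ⟨Xof_mono Finset.subset_union_left (Finset.nonempty_iff_ne_empty.1 hne) h, hd, h⟩

lemma mem_linkVerts_iff {n : ℕ} (p : ℕ → ℝ) (τ : Finset (Fin n)) (ω : Finset (Fin n) → ℝ)
    (hA : ω ∈ Succ p τ ∅) (v : Fin n) (hv : v ∉ τ) :
    v ∈ linkVerts (Xof p ω) τ ↔ ω ∈ Succ p τ {v} := by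
  rw [linkVerts, Finset.mem_filter]
  have hd : ({v} : Finset (Fin n)) ∩ τ = ∅ := by
    simp [Finset.singleton_inter_of_notMem hv]
  rw [and_iff_right (Finset.mem_univ v), mem_link_iff p τ ω {v} (Finset.singleton_nonempty v) hd]
  simp only [Finset.mem_powerset, Finset.subset_singleton_iff]
  constructor
  · intro h; exact h {v} (Or.inr rfl)  -- may need fixing
  · rintro h c (rfl | rfl)
    · exact hA
    · exact h

lemma linkVerts_not_mem_tau {n : ℕ} (X : Finset (Finset (Fin n))) (τ : Finset (Fin n))
    (v : Fin n) (hv : v ∈ linkVerts X τ) : v ∉ τ := by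
  simp only [linkVerts, link, Finset.mem_filter] at hv
  intro hvτ
  have := hv.2.2.1
  rw [Finset.singleton_inter_of_mem hvτ] at this
  simp at this

lemma subsets_of_pair {α : Type*} [DecidableEq α] {c' c : Finset α} (h : c' ⊆ c)
    (hc : c.card = 2) : c' = ∅ ∨ (∃ v ∈ c, c' = {v}) ∨ c' = c := by
  have h2 : c'.card ≤ 2 := hc ▸ Finset.card_le_card h
  rcases Nat.lt_or_ge c'.card 1 with h0 | h1
  · left; exact Finset.card_eq_zero.1 (by omega)
  rcases Nat.lt_or_ge c'.card 2 with h0 | h1'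
  · obtain ⟨v, hv⟩ := Finset.card_eq_one.1 (by omega : c'.card = 1)
    right; left
    exact ⟨v, h (hv ▸ Finset.mem_singleton_self v), hv⟩
  · right; right
    exact Finset.eq_of_subset_of_card_le h (by omega)

open Classical in
/-- The full event identity: conditioning event ∩ {vertices = W, edges = F} as an intersection
of block events. -/
lemma event_eq {n : ℕ} (p : ℕ → ℝ) (τ W : Finset (Fin n)) (F : Finset (Finset (Fin n)))
    (hW : W ∩ τ = ∅) (hF : ∀ e ∈ F, e.card = 2 ∧ e ⊆ W)
    (E : Finset (Fin n) → Set (Finset (Fin n) → ℝ))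
    (hEpos : ∀ c, ((c.card ≤ 1 ∧ c ⊆ W) ∨ c ∈ F) → E c = Succ p τ c)
    (hEneg : ∀ c, ¬((c.card ≤ 1 ∧ c ⊆ W) ∨ c ∈ F) → E c = (Succ p τ c)ᶜ) :
    {ω : Finset (Fin n) → ℝ | τ.Nonempty → τ ∈ Xof p ω} ∩
      {ω | linkVerts (Xof p ω) τ = W ∧
        (Finset.univ.filter fun e : Finset (Fin n) =>
          e.card = 2 ∧ e ∈ link (Xof p ω) τ) = F}
    = ⋂ c ∈ (insert ∅ ((Finset.univ \ τ).powersetCard 1 ∪ W.powersetCard 2) :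
        Finset (Finset (Fin n))),
        E c := by
  have hWτ : ∀ v ∈ W, v ∉ τ := by
    intro v hv hvτ
    have : v ∈ W ∩ τ := Finset.mem_inter.2 ⟨hv, hvτ⟩
    rw [hW] at this; exact absurd this (Finset.notMem_empty v)
  ext ω
  simp only [Set.mem_inter_iff, Set.mem_setOf_eq, Set.mem_iInter]
  constructor
  · rintro ⟨hAω, hV, hE⟩
    have hA : ω ∈ Succ p τ ∅ := by
      rw [← A_eq_Succ]; exact hAω
    have hvert : ∀ v ∈ W, ω ∈ Succ p τ {v} := by
      intro v hv
      exact (mem_linkVerts_iff p τ ω hA v (hWτ v hv)).1 (hV ▸ hv)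
    intro c hc
    rcases Finset.mem_insert.1 hc with rfl | hc
    · rw [hEpos ∅ (Or.inl ⟨by simp, Finset.empty_subset W⟩)]
      exact hA
    rcases Finset.mem_union.1 hc with hc | hc
    · rw [Finset.mem_powersetCard] at hc
      obtain ⟨v, rfl⟩ := Finset.card_eq_one.1 hc.2
      have hv : v ∉ τ := by
        have := hc.1 (Finset.mem_singleton_self v)
        simpa [Finset.mem_sdiff] using this
      by_cases hvW : v ∈ W
      · rw [hEpos {v} (Or.inl ⟨by simp, Finset.singleton_subset_iff.2 hvW⟩)]
        exact hvert v hvW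
      · rw [hEneg {v} (by
          rintro (⟨-, h⟩ | h)
          · exact hvW (Finset.singleton_subset_iff.1 h)
          · exact absurd (hF _ h).1 (by simp))]
        intro hS
        exact hvW (hV ▸ (mem_linkVerts_iff p τ ω hA v hv).2 hS)
    · rw [Finset.mem_powersetCard] at hc
      have hcd : c ∩ τ = ∅ := by
        rw [← Finset.subset_empty, ← hW]
        exact Finset.inter_subset_inter hc.1 (le_refl τ)
      have hcne : c.Nonempty := Finset.card_pos.1 (by omega)
      have hlink : c ∈ link (Xof p ω) τ ↔ ω ∈ Succ p τ c := by
        rw [mem_link_iff p τ ω c hcne hcd]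
        constructor
        · intro h; exact h c (Finset.mem_powerset_self c)
        · intro h c' hc'
          rcases subsets_of_pair (Finset.mem_powerset.1 hc') hc.2 with rfl | ⟨v, hv, rfl⟩ | rfl
          · exact hA
          · exact hvert v (hc.1 hv)
          · exact h
      by_cases hcF : c ∈ F
      · rw [hEpos c (Or.inr hcF)]
        have : c ∈ Finset.univ.filter fun e : Finset (Fin n) =>
            e.card = 2 ∧ e ∈ link (Xof p ω) τ := hE ▸ hcF
        rw [Finset.mem_filter] at this
        exact hlink.1 this.2.2
      · rw [hEneg c (by
          rintro (⟨h, -⟩ | h)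
          · omega
          · exact hcF h)]
        intro hS
        refine hcF (hE ▸ ?_)
        rw [Finset.mem_filter]
        exact ⟨Finset.mem_univ c, hc.2, hlink.2 hS⟩
  · intro h
    have hA : ω ∈ Succ p τ ∅ := by
      have := h ∅ (Finset.mem_insert_self _ _)
      rwa [hEpos ∅ (Or.inl ⟨by simp, Finset.empty_subset W⟩)] at this
    have hsingK : ∀ v : Fin n, v ∉ τ →
        ({v} : Finset (Fin n)) ∈ (insert ∅ ((Finset.univ \ τ).powersetCard 1 ∪
          W.powersetCard 2) : Finset (Finset (Fin n))) := by
      intro v hv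
      refine Finset.mem_insert_of_mem (Finset.mem_union_left _ ?_)
      rw [Finset.mem_powersetCard]
      exact ⟨Finset.singleton_subset_iff.2 (by simp [hv]), by simp⟩
    have hviff : ∀ v : Fin n, v ∉ τ → (v ∈ W ↔ ω ∈ Succ p τ {v}) := by
      intro v hv
      have hD := h {v} (hsingK v hv)
      by_cases hvW : v ∈ W
      · rw [hEpos {v} (Or.inl ⟨by simp, Finset.singleton_subset_iff.2 hvW⟩)] at hD
        exact ⟨fun _ => hD, fun _ => hvW⟩
      · rw [hEneg {v} (by
          rintro (⟨-, h'⟩ | h')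
          · exact hvW (Finset.singleton_subset_iff.1 h')
          · exact absurd (hF _ h').1 (by simp))] at hD
        exact ⟨fun h' => absurd h' hvW, fun h' => absurd h' hD⟩
    have hV : linkVerts (Xof p ω) τ = W := by
      ext v
      by_cases hv : v ∈ τ
      · constructor
        · intro h'; exact absurd hv (linkVerts_not_mem_tau _ _ _ h')
        · intro h'; exact absurd hv (hWτ v h')
      · rw [mem_linkVerts_iff p τ ω hA v hv]
        exact (hviff v hv).symm
    refine ⟨by rw [← A_eq_Succ] at hA; exact hA, hV, ?_⟩
    ext e
    rw [Finset.mem_filter]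
    constructor
    · rintro ⟨-, he2, helink⟩
      have hed : e ∩ τ = ∅ := by
        simp only [link, Finset.mem_filter] at helink
        exact helink.2.1
      have hene : e.Nonempty := Finset.card_pos.1 (by omega)
      have hsucc : ∀ c' ∈ e.powerset, ω ∈ Succ p τ c' :=
        (mem_link_iff p τ ω e hene hed).1 helink
      have heW : e ⊆ W := by
        intro v hv
        have hvτ : v ∉ τ := by
          intro hvτ
          have : v ∈ e ∩ τ := Finset.mem_inter.2 ⟨hv, hvτ⟩
          rw [hed] at this; exact absurd this (Finset.notMem_empty v)
        exact (hviff v hvτ).2 (hsucc {v} (Finset.mem_powerset.2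
          (Finset.singleton_subset_iff.2 hv)))
      by_contra heF
      have heK : e ∈ (insert ∅ ((Finset.univ \ τ).powersetCard 1 ∪
          W.powersetCard 2) : Finset (Finset (Fin n))) :=
        Finset.mem_insert_of_mem (Finset.mem_union_right _
          (Finset.mem_powersetCard.2 ⟨heW, he2⟩))
      have hD := h e heK
      rw [hEneg e (by
        rintro (⟨h', -⟩ | h')
        · omega
        · exact heF h')] at hD
      exact hD (hsucc e (Finset.mem_powerset_self e))
    · intro heF
      obtain ⟨he2, heW⟩ := hF e heF
      refine ⟨Finset.mem_univ e, he2, ?_⟩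
      have hed : e ∩ τ = ∅ := by
        rw [← Finset.subset_empty, ← hW]
        exact Finset.inter_subset_inter heW (le_refl τ)
      have hene : e.Nonempty := Finset.card_pos.1 (by omega)
      rw [mem_link_iff p τ ω e hene hed]
      intro c' hc'
      rcases subsets_of_pair (Finset.mem_powerset.1 hc') he2 with rfl | ⟨v, hv, rfl⟩ | rfl
      · exact hA
      · exact (hviff v (hWτ v (heW hv)) ).1 (heW hv)
      · have heK : c' ∈ (insert ∅ ((Finset.univ \ τ).powersetCard 1 ∪
            W.powersetCard 2) : Finset (Finset (Fin n))) :=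
          Finset.mem_insert_of_mem (Finset.mem_union_right _
            (Finset.mem_powersetCard.2 ⟨heW, he2⟩))
        have hD := h c' heK
        rwa [hEpos c' (Or.inr heF)] at hD

lemma event1_eq {n : ℕ} (p : ℕ → ℝ) (τ W : Finset (Fin n)) (hW : W ∩ τ = ∅)
    (E : Finset (Fin n) → Set (Finset (Fin n) → ℝ))
    (hEpos : ∀ c, c ⊆ W → E c = Succ p τ c)
    (hEneg : ∀ c, ¬ c ⊆ W → E c = (Succ p τ c)ᶜ) :
    {ω : Finset (Fin n) → ℝ | τ.Nonempty → τ ∈ Xof p ω} ∩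
      {ω | linkVerts (Xof p ω) τ = W}
    = ⋂ c ∈ (insert ∅ ((Finset.univ \ τ).powersetCard 1) : Finset (Finset (Fin n))),
        E c := by
  have hWτ : ∀ v ∈ W, v ∉ τ := by
    intro v hv hvτ
    have : v ∈ W ∩ τ := Finset.mem_inter.2 ⟨hv, hvτ⟩
    rw [hW] at this; exact absurd this (Finset.notMem_empty v)
  ext ω
  simp only [Set.mem_inter_iff, Set.mem_setOf_eq, Set.mem_iInter]
  constructor
  · rintro ⟨hAω, hV⟩
    have hA : ω ∈ Succ p τ ∅ := by rw [← A_eq_Succ]; exact hAω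
    intro c hc
    rcases Finset.mem_insert.1 hc with rfl | hc
    · rw [hEpos ∅ (Finset.empty_subset W)]; exact hA
    rw [Finset.mem_powersetCard] at hc
    obtain ⟨v, rfl⟩ := Finset.card_eq_one.1 hc.2
    have hv : v ∉ τ := by
      have := hc.1 (Finset.mem_singleton_self v)
      simpa [Finset.mem_sdiff] using this
    by_cases hvW : v ∈ W
    · rw [hEpos {v} (Finset.singleton_subset_iff.2 hvW)]
      exact (mem_linkVerts_iff p τ ω hA v hv).1 (hV ▸ hvW)
    · rw [hEneg {v} (fun h' => hvW (Finset.singleton_subset_iff.1 h'))]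
      intro hS
      exact hvW (hV ▸ (mem_linkVerts_iff p τ ω hA v hv).2 hS)
  · intro h
    have hA : ω ∈ Succ p τ ∅ := by
      have := h ∅ (Finset.mem_insert_self _ _)
      rwa [hEpos ∅ (Finset.empty_subset W)] at this
    refine ⟨by rw [← A_eq_Succ] at hA; exact hA, ?_⟩
    ext v
    by_cases hv : v ∈ τ
    · constructor
      · intro h'; exact absurd hv (linkVerts_not_mem_tau _ _ _ h')
      · intro h'; exact absurd hv (hWτ v h')
    · have hK : ({v} : Finset (Fin n)) ∈ (insert ∅ ((Finset.univ \ τ).powersetCard 1) :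
          Finset (Finset (Fin n))) := by
        refine Finset.mem_insert_of_mem ?_
        rw [Finset.mem_powersetCard]
        exact ⟨Finset.singleton_subset_iff.2 (by simp [hv]), by simp⟩
      have hD := h {v} hK
      rw [mem_linkVerts_iff p τ ω hA v hv]
      by_cases hvW : v ∈ W
      · rw [hEpos {v} (Finset.singleton_subset_iff.2 hvW)] at hD
        exact ⟨fun _ => hvW, fun _ => hD⟩
      · rw [hEneg {v} (fun h' => hvW (Finset.singleton_subset_iff.1 h'))] at hD
        exact ⟨fun h' => absurd h' hD, fun h' => absurd h' hvW⟩

lemma measure_iInter_D {n : ℕ} (p : ℕ → ℝ) (τ : Finset (Fin n))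
    (E : Finset (Fin n) → Set (Finset (Fin n) → ℝ))
    (hEor : ∀ c, E c = Succ p τ c ∨ E c = (Succ p τ c)ᶜ) (K : Finset (Finset (Fin n))) :
    coinSpace n (⋂ c ∈ K, E c) = ∏ c ∈ K, coinSpace n (E c) := by
  have hmeas : ∀ c, MeasurableSet (E c) := by
    intro c
    rcases hEor c with h | h <;> rw [h]
    · exact measurableSet_Succ p τ c
    · exact (measurableSet_Succ p τ c).compl
  refine pi_inter_blocks _ K
    (fun c => {ρ : Finset (Fin n) | ρ.Nonempty ∧ ρ \ τ = c ∧ ρ ⊆ τ ∪ c}) _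
    ?_ (fun c _ => hmeas c) ?_
  · rintro c - c' - hne ρ ⟨-, h2, -⟩ ⟨-, h2', -⟩
    exact hne (h2 ▸ h2')
  · intro c _ ω ω' hagree
    have hd : ∀ (ω ω' : Finset (Fin n) → ℝ), (∀ ρ ∈ {ρ : Finset (Fin n) |
        ρ.Nonempty ∧ ρ \ τ = c ∧ ρ ⊆ τ ∪ c}, ω ρ = ω' ρ) → ω ∈ Succ p τ c → ω' ∈ Succ p τ c :=
      fun ω ω' h => Succ_dep p τ c ω ω' (fun ρ hρ => h ρ hρ)
    rcases hEor c with h | h <;> rw [h]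
    · exact hd ω ω' hagree
    · intro hc hc'
      exact hc (hd ω' ω (fun ρ hρ => (hagree ρ hρ).symm) hc')

lemma measure_Succ_compl {n : ℕ} (p : ℕ → ℝ) (hp : ∀ i, p i ∈ Set.Icc (0 : ℝ) 1)
    (τ c : Finset (Fin n)) (hd : c ∩ τ = ∅) (hc : c.Nonempty) :
    coinSpace n ((Succ p τ c)ᶜ)
      = ENNReal.ofReal (1 - ∏ s ∈ τ.powerset, p (s.card + c.card - 1)) := by
  rw [measure_compl (measurableSet_Succ p τ c) (measure_ne_top _ _), measure_univ,
    measure_Succ p hp τ c hd hc]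
  rw [ENNReal.ofReal_sub _ (Finset.prod_nonneg (fun s _ => (hp _).1))]
  simp

lemma q_nonneg {n : ℕ} (p : ℕ → ℝ) (hp : ∀ i, p i ∈ Set.Icc (0 : ℝ) 1)
    (τ : Finset (Fin n)) (j : ℕ) : 0 ≤ ∏ s ∈ τ.powerset, p (s.card + j - 1) :=
  Finset.prod_nonneg (fun s _ => (hp _).1)

lemma q_le_one {n : ℕ} (p : ℕ → ℝ) (hp : ∀ i, p i ∈ Set.Icc (0 : ℝ) 1)
    (τ : Finset (Fin n)) (j : ℕ) : ∏ s ∈ τ.powerset, p (s.card + j - 1) ≤ 1 :=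
  Finset.prod_le_one (fun s _ => (hp _).1) (fun s _ => (hp _).2)

lemma q1_eq_rPrev {n k : ℕ} (p : ℕ → ℝ) (τ : Finset (Fin n)) (hτ : τ.card = k) :
    ∏ s ∈ τ.powerset, p (s.card + 1 - 1) = rPrev p k := by
  rw [Finset.prod_powerset, hτ, rPrev]
  refine Finset.prod_congr rfl (fun j hj => ?_)
  rw [Finset.prod_congr rfl (fun s hs => by
    rw [(Finset.mem_powersetCard.1 hs).2]),
    Finset.prod_const, Finset.card_powersetCard, hτ]
  norm_num

lemma q2_eq {n k : ℕ} (p : ℕ → ℝ) (τ : Finset (Fin n)) (hτ : τ.card = k) :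
    ∏ s ∈ τ.powerset, p (s.card + 2 - 1)
      = ∏ j ∈ Finset.range (k + 1), p (j + 1) ^ k.choose j := by
  rw [Finset.prod_powerset, hτ]
  refine Finset.prod_congr rfl (fun j hj => ?_)
  rw [Finset.prod_congr rfl (fun s hs => by
    rw [(Finset.mem_powersetCard.1 hs).2]),
    Finset.prod_const, Finset.card_powersetCard, hτ]
  norm_num

lemma rPrev_mul_q2 (p : ℕ → ℝ) (k : ℕ) :
    rPrev p k * ∏ j ∈ Finset.range (k + 1), p (j + 1) ^ k.choose j = rCur p k := by
  have h1 : rCur p k = p 0 * ∏ i ∈ Finset.range (k + 1), p (i + 1) ^ (k + 1).choose (i + 1) := by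
    rw [rCur, Finset.prod_range_succ']
    simp [mul_comm]
  have h2 : ∀ i, p (i + 1) ^ (k + 1).choose (i + 1)
      = p (i + 1) ^ k.choose i * p (i + 1) ^ k.choose (i + 1) := by
    intro i
    rw [← pow_add, Nat.choose_succ_succ]
  have h3 : rPrev p k = p 0 * ∏ i ∈ Finset.range k, p (i + 1) ^ k.choose (i + 1) := by
    rw [rPrev, Finset.prod_range_succ']
    simp [mul_comm]
  have h4 : ∏ i ∈ Finset.range (k + 1), p (i + 1) ^ k.choose (i + 1)
      = ∏ i ∈ Finset.range k, p (i + 1) ^ k.choose (i + 1) := by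
    rw [Finset.prod_range_succ, Nat.choose_succ_self, pow_zero, mul_one]
  rw [h1, Finset.prod_congr rfl (fun i _ => h2 i), Finset.prod_mul_distrib, h4, h3]
  ring

lemma prod_U1 {n : ℕ} (p : ℕ → ℝ) (hp : ∀ i, p i ∈ Set.Icc (0 : ℝ) 1)
    (τ W : Finset (Fin n)) (hW : W ∩ τ = ∅)
    (E : Finset (Fin n) → Set (Finset (Fin n) → ℝ))
    (hE1 : ∀ v : Fin n, v ∉ τ → v ∈ W → E {v} = Succ p τ {v})
    (hE2 : ∀ v : Fin n, v ∉ τ → v ∉ W → E {v} = (Succ p τ {v})ᶜ) :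
    ∏ c ∈ (Finset.univ \ τ).powersetCard 1,
        coinSpace n (E c)
      = ENNReal.ofReal (∏ s ∈ τ.powerset, p (s.card + 1 - 1)) ^ W.card *
        ENNReal.ofReal (1 - ∏ s ∈ τ.powerset, p (s.card + 1 - 1))
          ^ ((Finset.univ \ τ).card - W.card) := by
  set q1 := ∏ s ∈ τ.powerset, p (s.card + 1 - 1) with hq1
  rw [Finset.powersetCard_one, Finset.prod_map]
  simp only [Function.Embedding.coeFn_mk]
  have step : ∀ v ∈ Finset.univ \ τ,
      coinSpace n (E {v})
      = if v ∈ W then ENNReal.ofReal q1 else ENNReal.ofReal (1 - q1) := by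
    intro v hv
    have hvτ : v ∉ τ := (Finset.mem_sdiff.1 hv).2
    have hd : ({v} : Finset (Fin n)) ∩ τ = ∅ := by
      simp [Finset.singleton_inter_of_notMem hvτ]
    by_cases hvW : v ∈ W
    · rw [hE1 v hvτ hvW, if_pos hvW,
        measure_Succ p hp τ {v} hd (Finset.singleton_nonempty v)]
      simp [hq1]
    · rw [hE2 v hvτ hvW, if_neg hvW,
        measure_Succ_compl p hp τ {v} hd (Finset.singleton_nonempty v)]
      simp [hq1]
  rw [Finset.prod_congr rfl step, Finset.prod_ite, Finset.prod_const, Finset.prod_const]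
  have hfil1 : (Finset.univ \ τ).filter (fun v => v ∈ W) = W := by
    ext v
    simp only [Finset.mem_filter, Finset.mem_sdiff, Finset.mem_univ, true_and]
    constructor
    · rintro ⟨-, h⟩; exact h
    · intro h
      refine ⟨?_, h⟩
      intro hvτ
      have : v ∈ W ∩ τ := Finset.mem_inter.2 ⟨h, hvτ⟩
      rw [hW] at this; exact absurd this (Finset.notMem_empty v)
  have hfil2 : (Finset.univ \ τ).filter (fun v => v ∉ W) = (Finset.univ \ τ) \ W := by
    ext v; simp only [Finset.mem_filter, Finset.mem_sdiff]
  rw [hfil1, hfil2, Finset.card_sdiff_of_subset]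
  intro v hv
  simp only [Finset.mem_sdiff, Finset.mem_univ, true_and]
  intro hvτ
  have : v ∈ W ∩ τ := Finset.mem_inter.2 ⟨hv, hvτ⟩
  rw [hW] at this; exact absurd this (Finset.notMem_empty v)

lemma prod_U2 {n : ℕ} (p : ℕ → ℝ) (hp : ∀ i, p i ∈ Set.Icc (0 : ℝ) 1)
    (τ W : Finset (Fin n)) (F : Finset (Finset (Fin n)))
    (hW : W ∩ τ = ∅) (hF : ∀ e ∈ F, e.card = 2 ∧ e ⊆ W)
    (E : Finset (Fin n) → Set (Finset (Fin n) → ℝ))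
    (hE1 : ∀ c : Finset (Fin n), c.card = 2 → c ∈ F → E c = Succ p τ c)
    (hE2 : ∀ c : Finset (Fin n), c.card = 2 → c ∉ F → E c = (Succ p τ c)ᶜ) :
    ∏ c ∈ W.powersetCard 2,
        coinSpace n (E c)
      = ENNReal.ofReal (∏ s ∈ τ.powerset, p (s.card + 2 - 1)) ^ F.card *
        ENNReal.ofReal (1 - ∏ s ∈ τ.powerset, p (s.card + 2 - 1))
          ^ (W.card.choose 2 - F.card) := by
  set q2 := ∏ s ∈ τ.powerset, p (s.card + 2 - 1) with hq2
  have step : ∀ c ∈ W.powersetCard 2,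
      coinSpace n (E c)
      = if c ∈ F then ENNReal.ofReal q2 else ENNReal.ofReal (1 - q2) := by
    intro c hc
    rw [Finset.mem_powersetCard] at hc
    have hd : c ∩ τ = ∅ := by
      rw [← Finset.subset_empty, ← hW]
      exact Finset.inter_subset_inter hc.1 (le_refl τ)
    have hcne : c.Nonempty := Finset.card_pos.1 (by omega)
    by_cases hcF : c ∈ F
    · rw [hE1 c hc.2 hcF, if_pos hcF, measure_Succ p hp τ c hd hcne, hc.2]
    · rw [hE2 c hc.2 hcF, if_neg hcF,
        measure_Succ_compl p hp τ c hd hcne, hc.2]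
  rw [Finset.prod_congr rfl step, Finset.prod_ite, Finset.prod_const, Finset.prod_const]
  have hFsub : F ⊆ W.powersetCard 2 := by
    intro e he
    exact Finset.mem_powersetCard.2 ⟨(hF e he).2, (hF e he).1⟩
  have hfil1 : (W.powersetCard 2).filter (fun c => c ∈ F) = F := by
    ext c
    simp only [Finset.mem_filter]
    exact ⟨fun h => h.2, fun h => ⟨hFsub h, h⟩⟩
  have hfil2 : (W.powersetCard 2).filter (fun c => c ∉ F) = W.powersetCard 2 \ F := by
    ext c; simp only [Finset.mem_filter, Finset.mem_sdiff]
  rw [hfil1, hfil2, Finset.card_sdiff_of_subset hFsub, Finset.card_powersetCard]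

open Classical in
lemma measure_event2 {n : ℕ} (p : ℕ → ℝ) (hp : ∀ i, p i ∈ Set.Icc (0 : ℝ) 1)
    (τ W : Finset (Fin n)) (F : Finset (Finset (Fin n)))
    (hW : W ∩ τ = ∅) (hF : ∀ e ∈ F, e.card = 2 ∧ e ⊆ W) :
    coinSpace n ({ω : Finset (Fin n) → ℝ | τ.Nonempty → τ ∈ Xof p ω} ∩
      {ω | linkVerts (Xof p ω) τ = W ∧
        (Finset.univ.filter fun e : Finset (Fin n) =>
          e.card = 2 ∧ e ∈ link (Xof p ω) τ) = F})
    = coinSpace n (Succ p τ ∅) *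
      (ENNReal.ofReal (∏ s ∈ τ.powerset, p (s.card + 1 - 1)) ^ W.card *
       ENNReal.ofReal (1 - ∏ s ∈ τ.powerset, p (s.card + 1 - 1))
         ^ ((Finset.univ \ τ).card - W.card) *
      (ENNReal.ofReal (∏ s ∈ τ.powerset, p (s.card + 2 - 1)) ^ F.card *
       ENNReal.ofReal (1 - ∏ s ∈ τ.powerset, p (s.card + 2 - 1))
         ^ (W.card.choose 2 - F.card))) := by
  set E : Finset (Fin n) → Set (Finset (Fin n) → ℝ) := fun c =>
    if (c.card ≤ 1 ∧ c ⊆ W) ∨ c ∈ F then Succ p τ c else (Succ p τ c)ᶜ with hE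
  have hEpos : ∀ c, ((c.card ≤ 1 ∧ c ⊆ W) ∨ c ∈ F) → E c = Succ p τ c := by
    intro c hc; rw [hE]; exact if_pos hc
  have hEneg : ∀ c, ¬((c.card ≤ 1 ∧ c ⊆ W) ∨ c ∈ F) → E c = (Succ p τ c)ᶜ := by
    intro c hc; rw [hE]; exact if_neg hc
  have hEor : ∀ c, E c = Succ p τ c ∨ E c = (Succ p τ c)ᶜ := by
    intro c
    by_cases hc : (c.card ≤ 1 ∧ c ⊆ W) ∨ c ∈ F
    · exact Or.inl (hEpos c hc)
    · exact Or.inr (hEneg c hc)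
  rw [event_eq p τ W F hW hF E hEpos hEneg, measure_iInter_D p τ E hEor]
  have hemp : (∅ : Finset (Fin n)) ∉
      (Finset.univ \ τ).powersetCard 1 ∪ W.powersetCard 2 := by
    intro h
    rcases Finset.mem_union.1 h with h | h <;>
      simpa using (Finset.mem_powersetCard.1 h).2
  have hdisj : Disjoint ((Finset.univ \ τ).powersetCard 1) (W.powersetCard 2) := by
    rw [Finset.disjoint_left]
    intro c h1 h2
    have := (Finset.mem_powersetCard.1 h1).2
    have := (Finset.mem_powersetCard.1 h2).2
    omega
  rw [Finset.prod_insert hemp, Finset.prod_union hdisj]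
  rw [prod_U1 p hp τ W hW E
      (fun v hv hvW => hEpos {v} (Or.inl ⟨by simp, Finset.singleton_subset_iff.2 hvW⟩))
      (fun v hv hvW => hEneg {v} (by
        rintro (⟨-, h⟩ | h)
        · exact hvW (Finset.singleton_subset_iff.1 h)
        · exact absurd (hF _ h).1 (by simp))),
    prod_U2 p hp τ W F hW hF E
      (fun c hc2 hcF => hEpos c (Or.inr hcF))
      (fun c hc2 hcF => hEneg c (by
        rintro (⟨h, -⟩ | h)
        · omega
        · exact hcF h)),
    hEpos ∅ (Or.inl ⟨by simp, Finset.empty_subset W⟩)]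

open Classical in
lemma measure_event1 {n : ℕ} (p : ℕ → ℝ) (hp : ∀ i, p i ∈ Set.Icc (0 : ℝ) 1)
    (τ W : Finset (Fin n)) (hW : W ∩ τ = ∅) :
    coinSpace n ({ω : Finset (Fin n) → ℝ | τ.Nonempty → τ ∈ Xof p ω} ∩
      {ω | linkVerts (Xof p ω) τ = W})
    = coinSpace n (Succ p τ ∅) *
      (ENNReal.ofReal (∏ s ∈ τ.powerset, p (s.card + 1 - 1)) ^ W.card *
       ENNReal.ofReal (1 - ∏ s ∈ τ.powerset, p (s.card + 1 - 1))
         ^ ((Finset.univ \ τ).card - W.card)) := by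
  set E : Finset (Fin n) → Set (Finset (Fin n) → ℝ) := fun c =>
    if c ⊆ W then Succ p τ c else (Succ p τ c)ᶜ with hE
  have hEpos : ∀ c, c ⊆ W → E c = Succ p τ c := by
    intro c hc; rw [hE]; exact if_pos hc
  have hEneg : ∀ c, ¬ c ⊆ W → E c = (Succ p τ c)ᶜ := by
    intro c hc; rw [hE]; exact if_neg hc
  have hEor : ∀ c, E c = Succ p τ c ∨ E c = (Succ p τ c)ᶜ := by
    intro c
    by_cases hc : c ⊆ W
    · exact Or.inl (hEpos c hc)
    · exact Or.inr (hEneg c hc)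
  rw [event1_eq p τ W hW E hEpos hEneg, measure_iInter_D p τ E hEor]
  have hemp : (∅ : Finset (Fin n)) ∉ (Finset.univ \ τ).powersetCard 1 := by
    intro h
    simpa using (Finset.mem_powersetCard.1 h).2
  rw [Finset.prod_insert hemp]
  rw [prod_U1 p hp τ W hW E
      (fun v hv hvW => hEpos {v} (Finset.singleton_subset_iff.2 hvW))
      (fun v hv hvW => hEneg {v} (fun h => hvW (Finset.singleton_subset_iff.1 h))),
    hEpos ∅ (Finset.empty_subset W)]

lemma ofReal_combo4 (a b c d : ℝ) (ha : 0 ≤ a) (hb : 0 ≤ b) (hc : 0 ≤ c) (hd : 0 ≤ d)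
    (e f g h : ℕ) :
    ENNReal.ofReal a ^ e * ENNReal.ofReal b ^ f *
      (ENNReal.ofReal c ^ g * ENNReal.ofReal d ^ h)
    = ENNReal.ofReal (a ^ e * b ^ f * c ^ g * d ^ h) := by
  rw [← ENNReal.ofReal_pow ha, ← ENNReal.ofReal_pow hb, ← ENNReal.ofReal_pow hc,
    ← ENNReal.ofReal_pow hd, ← ENNReal.ofReal_mul (pow_nonneg ha _),
    ← ENNReal.ofReal_mul (pow_nonneg hc _),
    ← ENNReal.ofReal_mul (mul_nonneg (pow_nonneg ha _) (pow_nonneg hb _))]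
  congr 1
  ring

lemma ofReal_combo2 (a b : ℝ) (ha : 0 ≤ a) (hb : 0 ≤ b) (e f : ℕ) :
    ENNReal.ofReal a ^ e * ENNReal.ofReal b ^ f = ENNReal.ofReal (a ^ e * b ^ f) := by
  rw [← ENNReal.ofReal_pow ha, ← ENNReal.ofReal_pow hb, ← ENNReal.ofReal_mul (pow_nonneg ha _)]

lemma bridge (p : ℕ → ℝ) (k a b f g : ℕ) (haf : a = 0 → f = 0 ∧ g = 0) :
    rPrev p k ^ a * (1 - rPrev p k) ^ b *
      (∏ j ∈ Finset.range (k + 1), p (j + 1) ^ k.choose j) ^ f *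
      (1 - ∏ j ∈ Finset.range (k + 1), p (j + 1) ^ k.choose j) ^ g
    = rPrev p k ^ a * (1 - rPrev p k) ^ b * (rCur p k / rPrev p k) ^ f *
      (1 - rCur p k / rPrev p k) ^ g := by
  by_cases hr : rPrev p k = 0
  · by_cases ha : a = 0
    · rw [ha, (haf ha).1, (haf ha).2]
      simp
    · rw [hr, zero_pow ha]
      ring
  · have hq : ∏ j ∈ Finset.range (k + 1), p (j + 1) ^ k.choose j = rCur p k / rPrev p k := by
      rw [eq_div_iff hr, mul_comm]
      exact rPrev_mul_q2 p k
    rw [hq]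

open Classical in
lemma measurable_event1 {n : ℕ} (p : ℕ → ℝ) (τ W : Finset (Fin n)) (hW : W ∩ τ = ∅) :
    MeasurableSet ({ω : Finset (Fin n) → ℝ | τ.Nonempty → τ ∈ Xof p ω} ∩
      {ω | linkVerts (Xof p ω) τ = W}) := by
  rw [event1_eq p τ W hW (fun c => if c ⊆ W then Succ p τ c else (Succ p τ c)ᶜ)
    (fun c hc => if_pos hc) (fun c hc => if_neg hc)]
  refine MeasurableSet.biInter (Finset.countable_toSet _) (fun c hc => ?_)
  beta_reduce
  split_ifs
  · exact measurableSet_Succ p τ c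
  · exact (measurableSet_Succ p τ c).compl

lemma cancel2 {a : ℝ≥0∞} (ha0 : a ≠ 0) (hat : a ≠ ∞) (r : ℝ≥0∞) : a⁻¹ * (a * r) = r := by
  rw [← mul_assoc, ENNReal.inv_mul_cancel ha0 hat, one_mul]

lemma cancel3 {a : ℝ≥0∞} (ha0 : a ≠ 0) (hat : a ≠ ∞) (c r : ℝ≥0∞) :
    a⁻¹ * (c * (a * r)) = c * r := by
  have : a⁻¹ * (c * (a * r)) = c * (a⁻¹ * (a * r)) := by ring
  rw [this, cancel2 ha0 hat]


open Classical in
/-- Let `X ~ X(n, 𝐩)`, `0 ≤ k ≤ n − 2`, and let `τ` be a set of `k`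
vertices with `P(τ ∈ X) > 0`.  Conditionally on `{τ ∈ X}` (a full event when `τ = ∅`), the
`1`-skeleton of `lk_X(τ)` is distributed as `X(n−k, (r_{k−1}, r_k/r_{k−1}, 0, …, 0))`: for every
candidate vertex set `W` and edge set `F`,
`P(vertices = W, edges = F | τ ∈ X)
  = r_{k−1}^{#W} (1−r_{k−1})^{(n−k)−#W} (r_k/r_{k−1})^{#F} (1−r_k/r_{k−1})^{C(#W,2)−#F}`;
in particular the number of vertices of `lk_X(τ)` is `Bin(n−k, r_{k−1})`-distributed. -/
theorem statement16 (n k : ℕ) (hk : k ≤ n - 2) (p : ℕ → ℝ)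
    (hp : ∀ i, p i ∈ Set.Icc (0 : ℝ) 1)
    (τ : Finset (Fin n)) (hτ : τ.card = k)
    (hpos : coinSpace n {ω | τ.Nonempty → τ ∈ Xof p ω} ≠ 0) :
    (∀ W : Finset (Fin n), W ∩ τ = ∅ →
      ∀ F : Finset (Finset (Fin n)), (∀ e ∈ F, e.card = 2 ∧ e ⊆ W) →
        ProbabilityTheory.cond (coinSpace n) {ω | τ.Nonempty → τ ∈ Xof p ω}
            {ω | linkVerts (Xof p ω) τ = W ∧
              (Finset.univ.filter fun e : Finset (Fin n) =>
                e.card = 2 ∧ e ∈ link (Xof p ω) τ) = F}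
          = ENNReal.ofReal
              (rPrev p k ^ W.card * (1 - rPrev p k) ^ (n - k - W.card) *
                (rCur p k / rPrev p k) ^ F.card *
                (1 - rCur p k / rPrev p k) ^ (W.card.choose 2 - F.card))) ∧
    ∀ m : ℕ,
      ProbabilityTheory.cond (coinSpace n) {ω | τ.Nonempty → τ ∈ Xof p ω}
          {ω | (linkVerts (Xof p ω) τ).card = m}
        = ENNReal.ofReal
            (((n - k).choose m : ℝ) * rPrev p k ^ m * (1 - rPrev p k) ^ (n - k - m)) := by
  have hAmeas : MeasurableSet {ω : Finset (Fin n) → ℝ | τ.Nonempty → τ ∈ Xof p ω} := by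
    rw [A_eq_Succ]; exact measurableSet_Succ p τ ∅
  have hcard : (Finset.univ \ τ).card = n - k := by
    rw [Finset.card_sdiff_of_subset (Finset.subset_univ τ), Finset.card_univ, Fintype.card_fin, hτ]
  have hq1r : ∏ s ∈ τ.powerset, p (s.card + 1 - 1) = rPrev p k := q1_eq_rPrev p τ hτ
  have hq1nn : (0:ℝ) ≤ ∏ s ∈ τ.powerset, p (s.card + 1 - 1) := q_nonneg p hp τ 1
  have hq1le : ∏ s ∈ τ.powerset, p (s.card + 1 - 1) ≤ 1 := q_le_one p hp τ 1
  have hq2nn : (0:ℝ) ≤ ∏ s ∈ τ.powerset, p (s.card + 2 - 1) := q_nonneg p hp τ 2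
  have hq2le : ∏ s ∈ τ.powerset, p (s.card + 2 - 1) ≤ 1 := q_le_one p hp τ 2
  constructor
  · intro W hW F hF
    rw [ProbabilityTheory.cond_apply hAmeas, measure_event2 p hp τ W F hW hF,
      ← A_eq_Succ p τ, cancel2 hpos (measure_ne_top _ _),
      ofReal_combo4 _ _ _ _ hq1nn (by linarith) hq2nn (by linarith)]
    congr 1
    rw [hcard, hq1r, q2_eq p τ hτ]
    refine bridge p k _ _ _ _ ?_
    intro h0
    have hW0 : W = ∅ := Finset.card_eq_zero.1 h0
    have hF0 : F = ∅ := by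
      refine Finset.eq_empty_of_forall_notMem (fun e he => ?_)
      obtain ⟨he2, heW⟩ := hF e he
      rw [hW0] at heW
      have hle := Finset.card_le_card heW
      rw [Finset.card_empty] at hle
      omega
    rw [hF0, h0]
    simp
  · intro m
    rw [ProbabilityTheory.cond_apply hAmeas]
    have hsplit : {ω : Finset (Fin n) → ℝ | τ.Nonempty → τ ∈ Xof p ω} ∩
        {ω | (linkVerts (Xof p ω) τ).card = m}
        = ⋃ W ∈ ((Finset.univ \ τ).powersetCard m : Finset (Finset (Fin n))),
            ({ω : Finset (Fin n) → ℝ | τ.Nonempty → τ ∈ Xof p ω} ∩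
              {ω | linkVerts (Xof p ω) τ = W}) := by
      ext ω
      simp only [Set.mem_inter_iff, Set.mem_setOf_eq, Set.mem_iUnion, exists_prop]
      constructor
      · rintro ⟨hA, hm⟩
        refine ⟨linkVerts (Xof p ω) τ, Finset.mem_powersetCard.2 ⟨?_, hm⟩, hA, rfl⟩
        intro v hv
        exact Finset.mem_sdiff.2 ⟨Finset.mem_univ v, linkVerts_not_mem_tau _ _ _ hv⟩
      · rintro ⟨W, hWmem, hA, hV⟩
        exact ⟨hA, by rw [hV, (Finset.mem_powersetCard.1 hWmem).2]⟩
    have hWdisj : ∀ W ∈ (Finset.univ \ τ).powersetCard m, W ∩ τ = ∅ := by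
      intro W hWmem
      have hsub := (Finset.mem_powersetCard.1 hWmem).1
      refine Finset.eq_empty_of_forall_notMem (fun v hv => ?_)
      rcases Finset.mem_inter.1 hv with ⟨h1, h2⟩
      exact (Finset.mem_sdiff.1 (hsub h1)).2 h2
    rw [hsplit, measure_biUnion_finset ?hd (fun W hWmem => measurable_event1 p τ W
      (hWdisj W hWmem))]
    case hd =>
      intro W1 h1 W2 h2 hne
      simp only [Function.onFun]
      rw [Set.disjoint_left]
      rintro ω ⟨-, hV1⟩ ⟨-, hV2⟩
      exact hne (by rw [← hV1, ← hV2])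
    have hterm : ∀ W ∈ (Finset.univ \ τ).powersetCard m,
        coinSpace n ({ω : Finset (Fin n) → ℝ | τ.Nonempty → τ ∈ Xof p ω} ∩
          {ω | linkVerts (Xof p ω) τ = W})
        = coinSpace n {ω : Finset (Fin n) → ℝ | τ.Nonempty → τ ∈ Xof p ω} *
          ENNReal.ofReal (rPrev p k ^ m * (1 - rPrev p k) ^ (n - k - m)) := by
      intro W hWmem
      rw [measure_event1 p hp τ W (hWdisj W hWmem), A_eq_Succ,
        ofReal_combo2 _ _ hq1nn (by linarith), hcard, hq1r,
        (Finset.mem_powersetCard.1 hWmem).2]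
    rw [Finset.sum_congr rfl hterm, Finset.sum_const, Finset.card_powersetCard, hcard,
      nsmul_eq_mul, cancel3 hpos (measure_ne_top _ _),
      show ((n - k).choose m : ℝ) * rPrev p k ^ m * (1 - rPrev p k) ^ (n - k - m)
        = ((n - k).choose m : ℝ) * (rPrev p k ^ m * (1 - rPrev p k) ^ (n - k - m)) by ring,
      ENNReal.ofReal_mul (Nat.cast_nonneg _), ENNReal.ofReal_natCast]
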